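/- Let R be a commutative noetherian ring, let 𝔞 be an ideal of R, and let 𝒮 be a Serre subcategory of R-modules. If 𝒮 satisfies the C_𝔭 condition for every prime ideal 𝔭 that is minimal over 𝔞, then 𝒮 satisfies the C_𝔞 condition. -/

import Mathlib

universe u

open Submodule

variable {R : Type u} [CommRing R]

/-- `Γ_a(M)`, the `a`-torsion submodule of `M`: the set of elements annihilated by
some power of the ideal `a`. -/
def torsionGamma (a : Ideal R) (M : Type u) [AddCommGroup M] [Module R M] :
    Submodule R M :=
  ⨆ n : ℕ, Submodule.torsionBySet R M ((a ^ n : Ideal R) : Set R)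

/-- The class `S` satisfies the condition `C_a` on the module `M`:
if `Γ_a(M) = M` and `(0 :_M a) ∈ S` then `M ∈ S`. -/
def CCondOn (S : ModuleCat.{u} R → Prop) (a : Ideal R) (M : ModuleCat.{u} R) : Prop :=
  torsionGamma a M = ⊤ →
    S (ModuleCat.of R (Submodule.torsionBySet R M (a : Set R))) → S M

/-- The class `S` satisfies the condition `C_a` (on every `R`-module). -/
def CCond (S : ModuleCat.{u} R → Prop) (a : Ideal R) : Prop :=
  ∀ M : ModuleCat.{u} R, CCondOn S a M

/-- The class `S` is closed under isomorphisms of `R`-modules. -/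
def IsoClosed (S : ModuleCat.{u} R → Prop) : Prop :=
  ∀ ⦃M N : ModuleCat.{u} R⦄, (M ≃ₗ[R] N) → S M → S N

/-- `S` is a Serre subcategory of the category of `R`-modules: it is closed under
isomorphisms, contains the zero module, and is closed under submodules, quotient modules
and extensions. -/
structure IsSerreClass (S : ModuleCat.{u} R → Prop) : Prop where
  iso : IsoClosed S
  zero : ∀ M : ModuleCat.{u} R, Subsingleton M → S M
  subobj : ∀ (M : ModuleCat.{u} R) (N : Submodule R M), S M → S (ModuleCat.of R N)
  quot : ∀ (M : ModuleCat.{u} R) (N : Submodule R M), S M → S (ModuleCat.of R (M ⧸ N))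
  extension : ∀ (M : ModuleCat.{u} R) (N : Submodule R M),
    S (ModuleCat.of R N) → S (ModuleCat.of R (M ⧸ N)) → S M

section Helpers

variable {S : ModuleCat.{u} R → Prop}

lemma serre_of_injective (hS : IsSerreClass S) {A B : Type u} [AddCommGroup A] [Module R A]
    [AddCommGroup B] [Module R B] (f : A →ₗ[R] B) (hf : Function.Injective f)
    (hB : S (ModuleCat.of R B)) : S (ModuleCat.of R A) :=
  hS.iso (LinearEquiv.ofInjective f hf).symm
    (hS.subobj (ModuleCat.of R B) (LinearMap.range f) hB)

lemma serre_of_surjective (hS : IsSerreClass S) {A B : Type u} [AddCommGroup A] [Module R A]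
    [AddCommGroup B] [Module R B] (f : A →ₗ[R] B) (hf : Function.Surjective f)
    (hA : S (ModuleCat.of R A)) : S (ModuleCat.of R B) :=
  hS.iso (f.quotKerEquivOfSurjective hf)
    (hS.quot (ModuleCat.of R A) (LinearMap.ker f) hA)

lemma serre_of_le (hS : IsSerreClass S) {M : Type u} [AddCommGroup M] [Module R M]
    {N N' : Submodule R M} (h : N' ≤ N) (hN : S (ModuleCat.of R N)) :
    S (ModuleCat.of R N') :=
  serre_of_injective hS (Submodule.inclusion h) (Submodule.inclusion_injective h) hN

lemma serre_prod (hS : IsSerreClass S) {A B : Type u} [AddCommGroup A] [Module R A]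
    [AddCommGroup B] [Module R B] (hA : S (ModuleCat.of R A)) (hB : S (ModuleCat.of R B)) :
    S (ModuleCat.of R (A × B)) := by
  refine hS.extension (ModuleCat.of R (A × B)) (LinearMap.ker (LinearMap.snd R A B)) ?_ ?_
  · refine serre_of_injective hS
      ((LinearMap.fst R A B).comp (LinearMap.ker (LinearMap.snd R A B)).subtype) ?_ hA
    rintro ⟨x, hx⟩ ⟨y, hy⟩ hxy
    rw [LinearMap.mem_ker] at hx hy
    apply Subtype.ext
    exact Prod.ext hxy (hx.trans hy.symm)
  · exact hS.iso ((LinearMap.snd R A B).quotKerEquivOfSurjective Prod.snd_surjective).symm hB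

lemma serre_pi (hS : IsSerreClass S) {A : Type u} [AddCommGroup A] [Module R A]
    (hA : S (ModuleCat.of R A)) : ∀ n : ℕ, S (ModuleCat.of R (Fin n → A))
  | 0 => hS.zero _ (Subsingleton.intro fun a b => funext fun x => x.elim0)
  | (n + 1) => by
    have e : (Fin (n + 1) → A) ≃ₗ[R] A × (Fin n → A) :=
      { (Fin.consEquiv fun _ : Fin (n + 1) => A).symm with
        map_add' := fun x y => rfl
        map_smul' := fun r x => rfl }
    exact hS.iso e.symm (serre_prod hS hA (serre_pi hS hA n))

lemma mem_torsion_ideal_iff {I : Ideal R} {M : Type u} [AddCommGroup M] [Module R M] {x : M} :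
    x ∈ torsionBySet R M (I : Set R) ↔ ∀ r ∈ I, r • x = 0 := by
  rw [mem_torsionBySet_iff]
  exact ⟨fun h r hr => h ⟨r, hr⟩, fun h r => h r r.2⟩

lemma mem_torsionGamma_iff {a : Ideal R} {M : Type u} [AddCommGroup M] [Module R M] {x : M} :
    x ∈ torsionGamma a M ↔ ∃ n : ℕ, x ∈ torsionBySet R M ((a ^ n : Ideal R) : Set R) := by
  have mono : Monotone fun n : ℕ => torsionBySet R M ((a ^ n : Ideal R) : Set R) := by
    intro n m hnm
    exact torsionBySet_le_torsionBySet_of_subset (Ideal.pow_le_pow_right hnm)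
  exact mem_iSup_of_directed _ mono.directed_le

lemma cCond_top (hS : IsSerreClass S) : CCond S (⊤ : Ideal R) := by
  intro M hM _
  have hz : ∀ x : M, x = 0 := by
    intro x
    have hx : x ∈ torsionGamma (⊤ : Ideal R) M := by rw [hM]; trivial
    obtain ⟨n, hn⟩ := mem_torsionGamma_iff.mp hx
    rw [mem_torsion_ideal_iff] at hn
    have := hn 1 (by simp [Ideal.top_pow])
    simpa using this
  exact hS.zero M (Subsingleton.intro fun x y => (hz x).trans (hz y).symm)

lemma cCond_radical [IsNoetherianRing R] (hS : IsSerreClass S) (a : Ideal R)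
    (h : CCond S a.radical) : CCond S a := by
  intro M hM hH
  obtain ⟨k, hk⟩ := Ideal.exists_radical_pow_le_of_fg a (IsNoetherian.noetherian _)
  refine h M ?_ ?_
  · rw [eq_top_iff]
    intro x _
    have hx : x ∈ torsionGamma a M := by rw [hM]; trivial
    obtain ⟨n, hn⟩ := mem_torsionGamma_iff.mp hx
    refine mem_torsionGamma_iff.mpr ⟨k * n, ?_⟩
    have hle : (a.radical ^ (k * n) : Ideal R) ≤ a ^ n := by
      rw [pow_mul]; exact Ideal.pow_right_mono hk n
    exact torsionBySet_le_torsionBySet_of_subset (fun y hy => hle hy) hn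
  · exact serre_of_le hS
      (torsionBySet_le_torsionBySet_of_subset (fun y hy => a.le_radical hy)) hH

lemma cCond_inf [IsNoetherianRing R] (hS : IsSerreClass S) (c b : Ideal R)
    (hc : CCond S c) (hb : CCond S b) : CCond S (c ⊓ b) := by
  intro M hM hH
  set M₁ : Submodule R M := torsionGamma c M with hM₁def
  -- Step 1 : Γ_c(M) ∈ S
  have h1 : S (ModuleCat.of R M₁) := by
    refine hc (ModuleCat.of R M₁) ?_ ?_
    · rw [eq_top_iff]
      intro x _
      have hx := x.2
      obtain ⟨n, hn⟩ := mem_torsionGamma_iff.mp hx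
      refine mem_torsionGamma_iff.mpr ⟨n, ?_⟩
      rw [mem_torsion_ideal_iff] at hn ⊢
      intro r hr
      exact Subtype.ext (hn r hr)
    · -- (0 :_{M₁} c) embeds in (0 :_M c ⊓ b)
      have hg : ∀ x : torsionBySet R M₁ (c : Set R),
          ((x : M₁) : M) ∈ torsionBySet R M ((c ⊓ b : Ideal R) : Set R) := by
        intro x
        rw [mem_torsion_ideal_iff]
        intro r hr
        have h0 : r • (x : M₁) = 0 := mem_torsion_ideal_iff.mp x.2 r hr.1
        have := congrArg (Subtype.val) h0
        simpa only [Submodule.coe_smul, Submodule.coe_zero] using this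
      refine serre_of_injective hS
        ((M₁.subtype.comp (torsionBySet R M₁ (c : Set R)).subtype).codRestrict _ hg) ?_ hH
      exact by
        intro x y hxy; have h' := congrArg Subtype.val hxy; exact
        Subtype.ext (Subtype.ext h')
  -- Step 2 : M ⧸ M₁ is b-torsion
  have hquot : torsionGamma b (M ⧸ M₁) = ⊤ := by
    rw [eq_top_iff]
    intro x _
    obtain ⟨m, rfl⟩ := M₁.mkQ_surjective x
    have hm : m ∈ torsionGamma (c ⊓ b) M := by rw [hM]; trivial
    obtain ⟨n, hn⟩ := mem_torsionGamma_iff.mp hm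
    refine mem_torsionGamma_iff.mpr ⟨n, ?_⟩
    rw [mem_torsion_ideal_iff] at hn ⊢
    intro r hr
    rw [← map_smul, Submodule.mkQ_apply, Submodule.Quotient.mk_eq_zero]
    refine mem_torsionGamma_iff.mpr ⟨n, ?_⟩
    rw [mem_torsion_ideal_iff]
    intro y hy
    have hyr : y * r ∈ ((c ⊓ b : Ideal R)) ^ n := by
      have h2 : ((c * b : Ideal R)) ^ n ≤ ((c ⊓ b : Ideal R)) ^ n :=
        Ideal.pow_right_mono Ideal.mul_le_inf n
      apply h2
      rw [mul_pow]
      exact Ideal.mul_mem_mul hy hr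
    rw [smul_smul]
    exact hn (y * r) hyr
  -- Step 3 : (0 :_{M ⧸ M₁} b) ∈ S
  set T : Submodule R (M ⧸ M₁) := torsionBySet R (M ⧸ M₁) (b : Set R) with hTdef
  set L : Submodule R M := T.comap M₁.mkQ with hLdef
  obtain ⟨k, gen, hgen⟩ := fg_iff_exists_fin_generating_family.mp (IsNoetherian.noetherian b)
  have hgenb : ∀ i, gen i ∈ b := fun i => by
    rw [← hgen]; exact subset_span ⟨i, rfl⟩
  have hmem : ∀ (l : L) (i : Fin k), gen i • (l : M) ∈ M₁ := by
    intro l i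
    have hl : M₁.mkQ (l : M) ∈ T := l.2
    have h0 := mem_torsion_ideal_iff.mp hl (gen i) (hgenb i)
    rwa [← map_smul, Submodule.mkQ_apply, Submodule.Quotient.mk_eq_zero] at h0
  let φ : L →ₗ[R] (Fin k → M₁) :=
    { toFun := fun l => fun i => ⟨gen i • (l : M), hmem l i⟩
      map_add' := by
        intro x y; funext i; apply Subtype.ext; simp [smul_add]
      map_smul' := by
        intro r x; funext i; apply Subtype.ext; simp [smul_comm r (gen i)] }
  have hker : ∀ l : L, l ∈ LinearMap.ker φ ↔ (l : M) ∈ torsionBySet R M (b : Set R) := by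
    intro l
    rw [LinearMap.mem_ker]
    constructor
    · intro h0
      rw [mem_torsion_ideal_iff]
      intro r hr
      rw [← hgen] at hr
      induction hr using span_induction with
      | mem y hy =>
        obtain ⟨i, rfl⟩ := hy
        have h1 : φ l i = 0 := congrFun h0 i
        exact congrArg Subtype.val h1
      | zero => simp
      | add y z _ _ hy hz => rw [add_smul, hy, hz, add_zero]
      | smul t y _ hy => rw [smul_eq_mul, mul_smul, hy, smul_zero]
    · intro hl
      funext i
      exact Subtype.ext (mem_torsion_ideal_iff.mp hl (gen i) (hgenb i))
  -- ker φ ∈ S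
  have hkS : S (ModuleCat.of R (LinearMap.ker φ)) := by
    have hg : ∀ x : LinearMap.ker φ,
        (((x : L) : M)) ∈ torsionBySet R M ((c ⊓ b : Ideal R) : Set R) := by
      intro x
      have hx : ((x : L) : M) ∈ torsionBySet R M (b : Set R) := (hker _).mp x.2
      exact torsionBySet_le_torsionBySet_of_subset
        (fun y hy => (inf_le_right : c ⊓ b ≤ b) hy) hx
    refine serre_of_injective hS
      ((L.subtype.comp (LinearMap.ker φ).subtype).codRestrict _ hg) ?_ hH
    exact by
        intro x y hxy; have h' := congrArg Subtype.val hxy; exact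
      Subtype.ext (Subtype.ext h')
  -- L ⧸ ker φ ∈ S
  have hLq : S (ModuleCat.of R (L ⧸ LinearMap.ker φ)) := by
    refine serre_of_injective hS ((LinearMap.ker φ).liftQ φ le_rfl) ?_ (serre_pi hS h1 k)
    rw [← LinearMap.ker_eq_bot]
    exact Submodule.ker_liftQ_eq_bot _ _ _ le_rfl
  -- the natural surjection ψ : L → T
  let ψ : L →ₗ[R] T := (M₁.mkQ.comp L.subtype).codRestrict T (fun l => l.2)
  have hψ : Function.Surjective ψ := by
    rintro ⟨t, ht⟩
    obtain ⟨m, rfl⟩ := M₁.mkQ_surjective t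
    exact ⟨⟨m, ht⟩, rfl⟩
  let ρ : (LinearMap.ker φ) →ₗ[R] T := ψ.comp (LinearMap.ker φ).subtype
  have hVS : S (ModuleCat.of R (LinearMap.range ρ)) :=
    serre_of_surjective hS ρ.rangeRestrict (LinearMap.surjective_rangeRestrict ρ) hkS
  have hTq : S (ModuleCat.of R (T ⧸ LinearMap.range ρ)) := by
    have hle : LinearMap.ker φ ≤ LinearMap.ker ((LinearMap.range ρ).mkQ.comp ψ) := by
      intro x hx
      rw [LinearMap.mem_ker, LinearMap.comp_apply, Submodule.mkQ_apply,
        Submodule.Quotient.mk_eq_zero]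
      exact ⟨⟨x, hx⟩, rfl⟩
    refine serre_of_surjective hS ((LinearMap.ker φ).liftQ ((LinearMap.range ρ).mkQ.comp ψ) hle)
      ?_ hLq
    intro y
    obtain ⟨t, rfl⟩ := (LinearMap.range ρ).mkQ_surjective y
    obtain ⟨l, rfl⟩ := hψ t
    exact ⟨(LinearMap.ker φ).mkQ l, rfl⟩
  have hTS : S (ModuleCat.of R T) := hS.extension (ModuleCat.of R T) (LinearMap.range ρ) hVS hTq
  -- Step 4 : conclude
  have h2 : S (ModuleCat.of R (M ⧸ M₁)) := hb (ModuleCat.of R (M ⧸ M₁)) hquot hTS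
  exact hS.extension M M₁ h1 h2

lemma cCond_finset_inf [IsNoetherianRing R] (hS : IsSerreClass S) (s : Finset (Ideal R))
    (h : ∀ p ∈ s, CCond S p) : CCond S (s.inf id) := by
  classical
  induction s using Finset.induction_on with
  | empty => simpa using cCond_top hS
  | @insert p s hp ih =>
    rw [Finset.inf_insert]
    exact cCond_inf hS p (s.inf id) (h p (Finset.mem_insert_self p s))
      (ih fun q hq => h q (Finset.mem_insert_of_mem hq))

end Helpers

/-- If a Serre subcategory `S` satisfies `C_p` for every prime `p` minimal over `a`,
then `S` satisfies `C_a`. -/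
theorem stmt8 [IsNoetherianRing R] (a : Ideal R)
    (S : ModuleCat.{u} R → Prop)
    (hS : IsSerreClass S)
    (h : ∀ p ∈ a.minimalPrimes, CCond S p) :
    CCond S a := by
  have hfin : a.minimalPrimes.Finite := by
    rw [Ideal.minimalPrimes_eq_comap]
    exact (minimalPrimes.finite_of_isNoetherianRing (R ⧸ a)).image _
  apply cCond_radical hS
  have hrad : a.radical = hfin.toFinset.inf id := by
    rw [Finset.inf_id_eq_sInf, Set.Finite.coe_toFinset, Ideal.sInf_minimalPrimes]
  rw [hrad]
  exact cCond_finset_inf hS _ (fun p hp => h p (hfin.mem_toFinset.mp hp))
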